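/- Let q be a prime power with q ≡ 1 (mod 4), d = (q-1)/4, g a generator of F_q^*, and 0 ≤ i ≤ d-1. Set α = g^(4i+2) and define a₀ = (α+1)²/(4α), a₁ = (α²-1)/(4α), a₂ = (α-1)²/(4α), a₃ = a₁. Then f(x) = a₃x^(3d+1) + a₂x^(2d+1) + a₁x^(d+1) + a₀x satisfies f(f(x)) = x for all x ∈ F_q. -/

import Mathlib

theorem stmt5 {F : Type*} [Field F] [Fintype F] (q : ℕ)
    (hq : Fintype.card F = q) (hq4 : q % 4 = 1)
    (d : ℕ) (hd : d = (q - 1) / 4)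
    (g : Fˣ) (hg : ∀ x : Fˣ, x ∈ Subgroup.zpowers g)
    (i : ℕ) (hi : i ≤ d - 1)
    (α a0 a1 a2 a3 : F) (hα : α = (g : F) ^ (4 * i + 2))
    (ha0 : a0 = (α + 1) ^ 2 / (4 * α))
    (ha1 : a1 = (α ^ 2 - 1) / (4 * α))
    (ha2 : a2 = (α - 1) ^ 2 / (4 * α))
    (ha3 : a3 = a1)
    (f : F → F)
    (hf : ∀ x, f x = a3 * x ^ (3 * d + 1) + a2 * x ^ (2 * d + 1) +
      a1 * x ^ (d + 1) + a0 * x) :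
    ∀ x, f (f x) = x := by
  -- basic numerics
  have hq2 : 2 ≤ q := hq ▸ Fintype.one_lt_card
  have hq5 : 5 ≤ q := by omega
  have h4d : 4 * d = q - 1 := by omega
  have hd1 : 1 ≤ d := by omega
  -- characteristic facts
  have hqF : (q : F) = 0 := by rw [← hq]; exact FiniteField.cast_card_eq_zero F
  have h2 : (2 : F) ≠ 0 := by
    intro h2
    have hdvd2 : ringChar F ∣ 2 := ringChar.dvd (by exact_mod_cast h2)
    have hdvdq : ringChar F ∣ q := ringChar.dvd hqF
    rcases (Nat.dvd_prime Nat.prime_two).mp hdvd2 with h1 | h1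
    · have h10 : ((1 : ℕ) : F) = 0 := (ringChar.spec F 1).mpr (h1 ▸ dvd_refl _)
      simp at h10
    · rw [h1] at hdvdq
      omega
  have hα0 : α ≠ 0 := by rw [hα]; exact pow_ne_zero _ (Units.ne_zero g)
  have h4α : (4 : F) * α ≠ 0 := by
    refine mul_ne_zero ?_ hα0
    have : (4 : F) = 2 * 2 := by norm_num
    rw [this]; exact mul_ne_zero h2 h2
  -- generator facts
  letI := Classical.decEq F
  have hcardu : Nat.card Fˣ = q - 1 := by
    rw [Nat.card_units, Nat.card_eq_fintype_card, hq]
  have horder : orderOf g = q - 1 := by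
    rw [← hcardu]; exact orderOf_eq_card_of_forall_mem_zpowers hg
  have hg4du : g ^ (4 * d) = 1 := by
    rw [h4d, ← horder]; exact pow_orderOf_eq_one g
  have hg4d : (g : F) ^ (4 * d) = 1 := by
    simpa using congrArg Units.val hg4du
  have hneg : (g : F) ^ (2 * d) = -1 := by
    have hy2 : ((g : F) ^ (2 * d)) ^ 2 = 1 := by
      rw [← pow_mul, show 2 * d * 2 = 4 * d by ring]; exact hg4d
    have hy1 : (g : F) ^ (2 * d) ≠ 1 := by
      intro h
      have hu : g ^ (2 * d) = 1 := by
        apply Units.ext; push_cast; exact h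
      have := orderOf_dvd_of_pow_eq_one hu
      rw [horder] at this
      have := Nat.le_of_dvd (by omega) this
      omega
    have h0 : ((g : F) ^ (2 * d) - 1) * ((g : F) ^ (2 * d) + 1) = 0 := by
      linear_combination hy2
    rcases mul_eq_zero.mp h0 with h | h
    · exact absurd (sub_eq_zero.mp h) hy1
    · exact eq_neg_of_add_eq_zero_left h
  have hαd : α ^ d = -1 := by
    rw [hα, ← pow_mul, show (4 * i + 2) * d = 4 * d * i + 2 * d by ring,
      pow_add, pow_mul, hg4d, one_pow, one_mul, hneg]
  -- coefficient sums
  have hS1 : a3 + a2 + a1 + a0 = α := by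
    subst ha3 ha1 ha2 ha0; have h4 : (4 : F) ≠ 0 := left_ne_zero_of_mul h4α; field_simp; ring
  have hS2 : α * (a0 + a2 - a1 - a3) = 1 := by
    subst ha3 ha1 ha2 ha0; have h4 : (4 : F) ≠ 0 := left_ne_zero_of_mul h4α; field_simp; ring
  have hS3 : a0 - a2 = 1 := by
    subst ha2 ha0; have h4 : (4 : F) ≠ 0 := left_ne_zero_of_mul h4α; field_simp; ring
  -- structural rewriting of f
  have hfy : ∀ y : F, f y = y * (a3 * (y ^ d) ^ 3 + a2 * (y ^ d) ^ 2 + a1 * (y ^ d) + a0) := by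
    intro y
    have hp : ∀ k : ℕ, y ^ (k * d + 1) = (y ^ d) ^ k * y := by
      intro k; rw [pow_succ, mul_comm k d, pow_mul]
    rw [hf, hp 3, hp 2, show d + 1 = 1 * d + 1 by ring, hp 1]
    ring
  -- main proof
  intro x
  by_cases hx : x = 0
  · subst hx
    have hf0 : f 0 = 0 := by
      rw [hf]; simp [zero_pow]
    rw [hf0, hf0]
  · have hx4 : (x ^ d) ^ 4 = 1 := by
      rw [← pow_mul, mul_comm d 4, h4d, ← hq]
      exact FiniteField.pow_card_sub_one_eq_one x hx
    have h0 : ((x ^ d) - 1) * ((x ^ d) + 1) * ((x ^ d) ^ 2 + 1) = 0 := by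
      linear_combination hx4
    rcases mul_eq_zero.mp h0 with h01 | h3
    · rcases mul_eq_zero.mp h01 with h1 | h2
      · -- x^d = 1
        have hζ : x ^ d = 1 := sub_eq_zero.mp h1
        have hfx : f x = x * α := by
          rw [hfy, hζ]; linear_combination x * hS1
        have hfxd : (f x) ^ d = -1 := by
          rw [hfx, mul_pow, hζ, hαd, one_mul]
        rw [hfy (f x), hfxd, hfx]
        linear_combination x * hS2
      · -- x^d = -1
        have hζ : x ^ d = -1 := eq_neg_of_add_eq_zero_left h2
        set β : F := a0 + a2 - a1 - a3 with hβdef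
        have hβ : β = α⁻¹ := eq_inv_of_mul_eq_one_left (by linear_combination hS2)
        have hfx : f x = x * β := by
          rw [hfy, hζ]; ring
        have hβd : β ^ d = -1 := by
          rw [hβ, inv_pow, hαd]; norm_num
        have hfxd : (f x) ^ d = 1 := by
          rw [hfx, mul_pow, hζ, hβd]; ring
        have hαβ : β * α = 1 := by rw [hβ]; exact inv_mul_cancel₀ hα0
        rw [hfy (f x), hfxd, hfx]
        calc x * β * (a3 * 1 ^ 3 + a2 * 1 ^ 2 + a1 * 1 + a0)
            = x * (β * α) := by rw [← hS1]; ring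
          _ = x := by rw [hαβ, mul_one]
    · -- (x^d)^2 = -1
      have hζ2 : (x ^ d) ^ 2 = -1 := eq_neg_of_add_eq_zero_left h3
      have hfx : f x = x := by
        rw [hfy, ha3]
        have hζ3 : (x ^ d) ^ 3 = -(x ^ d) := by linear_combination (x ^ d) * hζ2
        rw [hζ3, hζ2]
        linear_combination x * hS3 + x * ha3.symm - x * ha3.symm
      rw [hfx, hfx]
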